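/- Let M be a nonnegative matrix and (S*, T*) a densest submatrix with density d_opt and entry sum E = d_opt · sqrt(|S*|·|T*|). Then every row u ∈ S* satisfies R(M, u, T*) ≥ τ_{S*} and every column v ∈ T* satisfies C(M, S*, v) ≥ τ_{T*}, where τ_{S*} = E(1 − sqrt(1 − 1/|S*|)) and τ_{T*} = E(1 − sqrt(1 − 1/|T*|)); consequently sqrt(τ_{S*}·τ_{T*}) ≥ d_opt/2. -/

import Mathlib

/-- Density of a submatrix `(S, T)` of `M`. -/
noncomputable def density {I J : Type*} (M : I → J → ℝ) (S : Finset I) (T : Finset J) : ℝ :=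
    (∑ s ∈ S, ∑ t ∈ T, M s t) / Real.sqrt ((S.card : ℝ) * T.card)

private lemma aux_row {I J : Type*} [DecidableEq I] (M : I → J → ℝ)
    (S : Finset I) (T : Finset J) (hS : S.Nonempty) (hT : T.Nonempty)
    (hopt : ∀ S' : Finset I, S'.Nonempty → density M S' T ≤ density M S T)
    (u : I) (hu : u ∈ S) :
    (∑ s ∈ S, ∑ t ∈ T, M s t) * (1 - Real.sqrt (1 - 1 / (S.card : ℝ)))
      ≤ ∑ t ∈ T, M u t := by
  set E := ∑ s ∈ S, ∑ t ∈ T, M s t with hE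
  set R := ∑ t ∈ T, M u t with hR
  have hscard : (1 : ℕ) ≤ S.card := hS.card_pos
  have htpos : (0 : ℝ) < T.card := by exact_mod_cast hT.card_pos
  by_cases h1 : S.card = 1
  · obtain ⟨a, ha⟩ := Finset.card_eq_one.mp h1
    have hau : a = u := by
      have := hu; rw [ha, Finset.mem_singleton] at this; exact this.symm
    have hEeq : E = R := by
      rw [hE, hR, ha, hau, Finset.sum_singleton]
    rw [h1]
    norm_num [hEeq]
  · have h2 : 2 ≤ S.card := by omega
    have hspos : (0 : ℝ) < S.card := by positivity
    have hS' : (S.erase u).Nonempty := by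
      rw [← Finset.card_pos, Finset.card_erase_of_mem hu]; omega
    have hcard' : ((S.erase u).card : ℝ) = (S.card : ℝ) - 1 := by
      rw [Finset.card_erase_of_mem hu]
      push_cast [Nat.cast_sub hscard]
      ring
    have hkey := hopt (S.erase u) hS'
    have hsum' : (∑ s ∈ S.erase u, ∑ t ∈ T, M s t) = E - R := by
      rw [hE, hR, Finset.sum_erase_eq_sub hu]
    rw [density, density, hsum', hcard'] at hkey
    have hs1pos : (0 : ℝ) < (S.card : ℝ) - 1 := by
      have : (2:ℝ) ≤ S.card := by exact_mod_cast h2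
      linarith
    have hsq1 : (0:ℝ) < Real.sqrt (((S.card : ℝ) - 1) * T.card) := by
      apply Real.sqrt_pos.mpr; positivity
    have h3 : E - R ≤ E / Real.sqrt ((S.card : ℝ) * T.card)
        * Real.sqrt (((S.card : ℝ) - 1) * T.card) := by
      rw [div_le_iff₀ hsq1] at hkey
      exact hkey
    have h4 : E / Real.sqrt ((S.card : ℝ) * T.card)
        * Real.sqrt (((S.card : ℝ) - 1) * T.card)
        = E * Real.sqrt (1 - 1 / (S.card : ℝ)) := by
      have hst : (0:ℝ) < Real.sqrt ((S.card : ℝ) * T.card) := by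
        apply Real.sqrt_pos.mpr; positivity
      rw [div_mul_eq_mul_div, mul_div_assoc]
      congr 1
      rw [← Real.sqrt_div (by positivity)]
      congr 1
      field_simp
    rw [h4] at h3
    linarith

theorem stmt_17 {I J : Type*} [Fintype I] [Fintype J] (M : I → J → ℝ)
    (hM : ∀ i j, 0 ≤ M i j)
    (Sstar : Finset I) (Tstar : Finset J)
    (hS : Sstar.Nonempty) (hT : Tstar.Nonempty)
    (hopt : ∀ (S : Finset I) (T : Finset J), S.Nonempty → T.Nonempty →
      density M S T ≤ density M Sstar Tstar)
    (E τS τT : ℝ)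
    (hE : E = ∑ s ∈ Sstar, ∑ t ∈ Tstar, M s t)
    (hτS : τS = E * (1 - Real.sqrt (1 - 1 / (Sstar.card : ℝ))))
    (hτT : τT = E * (1 - Real.sqrt (1 - 1 / (Tstar.card : ℝ)))) :
    (∀ u ∈ Sstar, (∑ t ∈ Tstar, M u t) ≥ τS) ∧
    (∀ v ∈ Tstar, (∑ s ∈ Sstar, M s v) ≥ τT) ∧
    Real.sqrt (τS * τT) ≥ density M Sstar Tstar / 2 := by
  have hdens_swap : ∀ (S : Finset I) (T : Finset J),
      density (fun j i => M i j) T S = density M S T := by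
    intro S T
    rw [density, density, Finset.sum_comm, mul_comm ((T.card : ℝ)) _]
  have hrow : ∀ u ∈ Sstar, (∑ t ∈ Tstar, M u t) ≥ τS := by
    intro u hu
    rw [hτS, hE]
    classical
    exact aux_row M Sstar Tstar hS hT (fun S' hS' => hopt S' Tstar hS' hT) u hu
  have hcol : ∀ v ∈ Tstar, (∑ s ∈ Sstar, M s v) ≥ τT := by
    intro v hv
    rw [hτT, hE]
    classical
    have := aux_row (fun j i => M i j) Tstar Sstar hT hS
      (fun T' hT' => by
        rw [hdens_swap, hdens_swap]; exact hopt Sstar T' hS hT') v hv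
    rw [Finset.sum_comm] at this
    exact this
  refine ⟨hrow, hcol, ?_⟩
  have hE0 : 0 ≤ E := by
    rw [hE]
    apply Finset.sum_nonneg; intro s _
    exact Finset.sum_nonneg fun t _ => hM s t
  have hs1 : (1 : ℝ) ≤ Sstar.card := by exact_mod_cast hS.card_pos
  have ht1 : (1 : ℝ) ≤ Tstar.card := by exact_mod_cast hT.card_pos
  have hspos : (0 : ℝ) < Sstar.card := by linarith
  have htpos : (0 : ℝ) < Tstar.card := by linarith
  have sqrt_bound : ∀ x : ℝ, 1 ≤ x →
      Real.sqrt (1 - 1 / x) ≤ 1 - 1 / (2 * x) := by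
    intro x hx
    have hx0 : (0:ℝ) < x := by linarith
    have h1 : (1:ℝ) - 1 / (2 * x) ≥ 0 := by
      have : 1 / (2 * x) ≤ 1 / 2 := by
        apply div_le_div_of_nonneg_left <;> linarith
      linarith
    have h2 : 1 - 1 / x ≤ (1 - 1 / (2 * x)) ^ 2 := by
      have hxne : x ≠ 0 := ne_of_gt hx0
      field_simp
      nlinarith [sq_nonneg x]
    calc Real.sqrt (1 - 1 / x) ≤ Real.sqrt ((1 - 1 / (2 * x)) ^ 2) :=
          Real.sqrt_le_sqrt h2
      _ = 1 - 1 / (2 * x) := Real.sqrt_sq h1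
  have hτS' : E / (2 * Sstar.card) ≤ τS := by
    rw [hτS]
    have h0 := sqrt_bound (Sstar.card : ℝ) hs1
    have h := mul_le_mul_of_nonneg_left
      (by linarith : 1 / (2 * (Sstar.card:ℝ)) ≤ 1 - Real.sqrt (1 - 1 / (Sstar.card:ℝ))) hE0
    calc E / (2 * (Sstar.card:ℝ)) = E * (1 / (2 * (Sstar.card:ℝ))) := by ring
      _ ≤ E * (1 - Real.sqrt (1 - 1 / (Sstar.card:ℝ))) := h
  have hτT' : E / (2 * Tstar.card) ≤ τT := by
    rw [hτT]
    have h0 := sqrt_bound (Tstar.card : ℝ) ht1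
    have h := mul_le_mul_of_nonneg_left
      (by linarith : 1 / (2 * (Tstar.card:ℝ)) ≤ 1 - Real.sqrt (1 - 1 / (Tstar.card:ℝ))) hE0
    calc E / (2 * (Tstar.card:ℝ)) = E * (1 / (2 * (Tstar.card:ℝ))) := by ring
      _ ≤ E * (1 - Real.sqrt (1 - 1 / (Tstar.card:ℝ))) := h
  have hfac : (0:ℝ) ≤ E / (2 * (Sstar.card:ℝ)) := by positivity
  have hprod : (E / (2 * Sstar.card)) * (E / (2 * Tstar.card)) ≤ τS * τT :=
    mul_le_mul hτS' hτT' (by positivity) (by linarith)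
  have hsq : Real.sqrt ((E / (2 * Sstar.card)) * (E / (2 * Tstar.card)))
      = E / (2 * Real.sqrt ((Sstar.card : ℝ) * Tstar.card)) := by
    have hsq2 : Real.sqrt ((Sstar.card:ℝ) * Tstar.card) ^ 2 = (Sstar.card:ℝ) * Tstar.card :=
      Real.sq_sqrt (by positivity)
    have hne : (0:ℝ) < Real.sqrt ((Sstar.card:ℝ) * Tstar.card) := by
      apply Real.sqrt_pos.mpr; positivity
    have h1 : (E / (2 * (Sstar.card:ℝ))) * (E / (2 * (Tstar.card:ℝ)))
        = (E / (2 * Real.sqrt ((Sstar.card:ℝ) * Tstar.card))) ^ 2 := by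
      have hss : Real.sqrt (Sstar.card:ℝ) ^ 2 = (Sstar.card:ℝ) := Real.sq_sqrt (le_of_lt hspos)
      have htt : Real.sqrt (Tstar.card:ℝ) ^ 2 = (Tstar.card:ℝ) := Real.sq_sqrt (le_of_lt htpos)
      field_simp
      linear_combination E ^ 2 * hsq2
    rw [h1, Real.sqrt_sq (by positivity)]
  calc Real.sqrt (τS * τT)
      ≥ Real.sqrt ((E / (2 * Sstar.card)) * (E / (2 * Tstar.card))) :=
        Real.sqrt_le_sqrt hprod
    _ = E / (2 * Real.sqrt ((Sstar.card : ℝ) * Tstar.card)) := hsq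
    _ = density M Sstar Tstar / 2 := by
        rw [density, ← hE]; ring
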